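/- Let A ∈ ℝ^{n×n} with nonzero rows a_i and let r ∈ ℝⁿ. If α = max_i ‖A a_i‖²/‖a_i‖² and 2‖Aᵀ A r‖² ≥ α ‖A r‖², then the one-step randomized Kaczmarz expectation satisfies E‖A r'‖² ≤ ‖A r‖², i.e., ‖Ar‖² is nonincreasing in expectation whenever the residual is dominated by large singular directions. -/

import Mathlib

open RealInnerProductSpace Finset Matrix
noncomputable section

/-- Coercion of a plain vector to Euclidean space (for norms and inner products). -/
def toE {n : ℕ} (v : Fin n → ℝ) : EuclideanSpace ℝ (Fin n) := WithLp.toLp 2 v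

lemma inner_toE {n : ℕ} (u v : Fin n → ℝ) : ⟪toE u, toE v⟫ = ∑ i, u i * v i := by
  simp [toE, PiLp.inner_apply, RCLike.inner_apply, mul_comm]

lemma norm_toE_sq {n : ℕ} (v : Fin n → ℝ) : ‖toE v‖ ^ 2 = ∑ i, v i ^ 2 := by
  rw [← real_inner_self_eq_norm_sq, inner_toE]
  simp [sq]

lemma alg_helper (b F P d I g : ℝ) (hb : b ≠ 0) (hF : F ≠ 0) :
    (b / F) * (P - 2 * (d / b) * I + (d / b) ^ 2 * g)
      = (1 / F) * (b * P - 2 * (d * I) + d ^ 2 * (g / b)) := by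
  field_simp

/-- If `2‖Aᵀ A r‖² ≥ α ‖A r‖²` then `‖A r‖²` is nonincreasing in expectation. -/
theorem kaczmarz_nonincreasing_when_dominated {n : ℕ} (A : Matrix (Fin n) (Fin n) ℝ)
    (hrows : ∀ i, A i ≠ 0) (r : Fin n → ℝ)
    (α : ℝ) (hα : IsGreatest (Set.range fun i => ‖toE (A.mulVec (A i))‖ ^ 2 / ‖toE (A i)‖ ^ 2) α)
    (hdom : 2 * ‖toE (Aᵀ.mulVec (A.mulVec r))‖ ^ 2 ≥ α * ‖toE (A.mulVec r)‖ ^ 2) :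
    ∑ i, (‖toE (A i)‖ ^ 2 / (∑ j, ‖toE (A j)‖ ^ 2)) *
        ‖toE (A.mulVec (r - (⟪toE (A i), toE r⟫ / ‖toE (A i)‖ ^ 2) • A i))‖ ^ 2
      ≤ ‖toE (A.mulVec r)‖ ^ 2 := by
  obtain ⟨i0, _⟩ := hα.1
  have hne : Nonempty (Fin n) := ⟨i0⟩
  set b : Fin n → ℝ := fun i => ‖toE (A i)‖ ^ 2 with hbdef
  have hb : ∀ i, 0 < b i := fun i =>
    pow_pos (norm_pos_iff.mpr (fun h => hrows i (by simpa [toE] using h))) 2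
  set F : ℝ := ∑ j, b j with hFdef
  have hF : 0 < F := Finset.sum_pos (fun i _ => hb i) Finset.univ_nonempty
  set P : ℝ := ‖toE (A.mulVec r)‖ ^ 2 with hPdef
  set Q : ℝ := ‖toE (Aᵀ.mulVec (A.mulVec r))‖ ^ 2 with hQdef
  set d : Fin n → ℝ := fun i => ⟪toE (A i), toE r⟫ with hddef
  set g : Fin n → ℝ := fun i => ‖toE (A.mulVec (A i))‖ ^ 2 with hgdef
  set I : Fin n → ℝ := fun i => ⟪toE (A.mulVec r), toE (A.mulVec (A i))⟫ with hIdef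
  have hd : ∀ i, d i = A.mulVec r i := by
    intro i
    show ⟪toE (A i), toE r⟫ = A.mulVec r i
    rw [inner_toE]
    simp [toE, Matrix.mulVec, dotProduct]
  -- term expansion
  have hexp : ∀ i, ‖toE (A.mulVec (r - (d i / b i) • A i))‖ ^ 2
      = P - 2 * (d i / b i) * I i + (d i / b i) ^ 2 * g i := by
    intro i
    have h1 : toE (A.mulVec (r - (d i / b i) • A i))
        = toE (A.mulVec r) - (d i / b i) • toE (A.mulVec (A i)) := by
      rw [Matrix.mulVec_sub, Matrix.mulVec_smul]; simp [toE]
    rw [h1, norm_sub_sq_real, real_inner_smul_right, norm_smul, mul_pow,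
      Real.norm_eq_abs, sq_abs]
    simp only [hPdef, hgdef, hIdef]
    ring
  have hf2 : ∑ i, d i ^ 2 = P := by
    rw [hPdef, norm_toE_sq]
    exact Finset.sum_congr rfl fun i _ => by rw [hd i]
  -- w j = (Aᵀ A r) j
  have hw : ∀ j, Aᵀ.mulVec (A.mulVec r) j = ∑ i, A i j * A.mulVec r i := by
    intro j; simp [Matrix.mulVec, dotProduct, Matrix.transpose_apply]
  have hI2 : ∀ i, I i = ∑ j, Aᵀ.mulVec (A.mulVec r) j * A i j := by
    intro i
    rw [hIdef]
    simp only [inner_toE]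
    have : ∑ k, A.mulVec r k * A.mulVec (A i) k = (A.mulVec r) ⬝ᵥ (A.mulVec (A i)) := rfl
    rw [this, Matrix.dotProduct_mulVec, ← Matrix.mulVec_transpose]
    rfl
  have hf1 : ∑ i, d i * I i = Q := by
    rw [hQdef, norm_toE_sq]
    simp_rw [hd, hI2, Finset.mul_sum]
    rw [Finset.sum_comm]
    refine Finset.sum_congr rfl fun j _ => ?_
    have : ∑ i, A.mulVec r i * (Aᵀ.mulVec (A.mulVec r) j * A i j)
        = Aᵀ.mulVec (A.mulVec r) j * ∑ i, A i j * A.mulVec r i := by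
      rw [Finset.mul_sum]
      exact Finset.sum_congr rfl fun i _ => by ring
    rw [this, ← hw j, sq]
  have hf3 : ∀ i, g i / b i ≤ α := fun i => hα.2 ⟨i, rfl⟩
  have hS : ∑ i, d i ^ 2 * (g i / b i) ≤ α * P := by
    calc ∑ i, d i ^ 2 * (g i / b i) ≤ ∑ i, d i ^ 2 * α :=
          Finset.sum_le_sum fun i _ => mul_le_mul_of_nonneg_left (hf3 i) (sq_nonneg _)
      _ = α * P := by rw [← Finset.sum_mul, hf2]; ring
  calc ∑ i, (b i / F) * ‖toE (A.mulVec (r - (d i / b i) • A i))‖ ^ 2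
      = ∑ i, (1 / F) * (b i * P - 2 * (d i * I i) + d i ^ 2 * (g i / b i)) := by
        refine Finset.sum_congr rfl fun i _ => ?_
        rw [hexp i, alg_helper _ _ _ _ _ _ (hb i).ne' hF.ne']
    _ = (1 / F) * (F * P - 2 * Q + ∑ i, d i ^ 2 * (g i / b i)) := by
        rw [← Finset.mul_sum]
        congr 1
        rw [Finset.sum_add_distrib, Finset.sum_sub_distrib, ← Finset.sum_mul,
          ← Finset.mul_sum, hf1]
    _ ≤ (1 / F) * (F * P) := by
        apply mul_le_mul_of_nonneg_left _ (le_of_lt (one_div_pos.mpr hF))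
        linarith [hdom, hS]
    _ = P := by field_simp
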